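/- Define V(x,y) = −(y + 1)·(x² + 2x²y + x²y² + y²) on ℝ². Then for all (x,y) ∈ ℝ², (−y)·∂V/∂x(x,y) + x·(1 + y)³·∂V/∂y(x,y) = V(x,y)·(3x·(1 + y)²), i.e. V is an inverse integrating factor of the system ẋ = −y, ẏ = x(1 + y)³ (note that 3x(1+y)² is the divergence of this vector field). -/

import Mathlib

/-- `V(x,y) = −(y + 1)(x² + 2x²y + x²y² + y²)` is an inverse integrating factor of
the Abel system `ẋ = −y, ẏ = x(1 + y)³`:
`X₁·∂V/∂x + X₂·∂V/∂y = V · div(X)`, where `div(X) = 3x(1 + y)²`. -/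
theorem stmt_19 (x y : ℝ) :
    (-y) * deriv (fun t : ℝ =>
        -(y + 1) * (t ^ 2 + 2 * t ^ 2 * y + t ^ 2 * y ^ 2 + y ^ 2)) x
      + (x * (1 + y) ^ 3) * deriv (fun t : ℝ =>
        -(t + 1) * (x ^ 2 + 2 * x ^ 2 * t + x ^ 2 * t ^ 2 + t ^ 2)) y
      = (-(y + 1) * (x ^ 2 + 2 * x ^ 2 * y + x ^ 2 * y ^ 2 + y ^ 2)) *
          (3 * x * (1 + y) ^ 2) := by
  have h1 : deriv (fun t : ℝ =>
      -(y + 1) * (t ^ 2 + 2 * t ^ 2 * y + t ^ 2 * y ^ 2 + y ^ 2)) x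
      = -(y + 1) * (2 * x + 2 * (2 * x) * y + 2 * x * y ^ 2) := by
    have : HasDerivAt (fun t : ℝ =>
        -(y + 1) * (t ^ 2 + 2 * t ^ 2 * y + t ^ 2 * y ^ 2 + y ^ 2))
        (-(y + 1) * (2 * x + 2 * (2 * x) * y + 2 * x * y ^ 2)) x := by
      have h := ((((hasDerivAt_pow 2 x).add
        (((hasDerivAt_pow 2 x).const_mul 2).mul_const y)).add
        ((hasDerivAt_pow 2 x).mul_const (y ^ 2))).add_const (y ^ 2)).const_mul (-(y + 1))
      exact h.congr_deriv (by simp only [Nat.cast_ofNat, Nat.add_one_sub_one, pow_one])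
    exact this.deriv
  have h2 : deriv (fun t : ℝ =>
      -(t + 1) * (x ^ 2 + 2 * x ^ 2 * t + x ^ 2 * t ^ 2 + t ^ 2)) y
      = -(x ^ 2 + 2 * x ^ 2 * y + x ^ 2 * y ^ 2 + y ^ 2)
        + -(y + 1) * (2 * x ^ 2 + x ^ 2 * (2 * y) + 2 * y) := by
    have : HasDerivAt (fun t : ℝ =>
        -(t + 1) * (x ^ 2 + 2 * x ^ 2 * t + x ^ 2 * t ^ 2 + t ^ 2))
        (-(x ^ 2 + 2 * x ^ 2 * y + x ^ 2 * y ^ 2 + y ^ 2)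
         + -(y + 1) * (2 * x ^ 2 + x ^ 2 * (2 * y) + 2 * y)) y := by
      have ha : HasDerivAt (fun t : ℝ => -(t + 1)) (-1) y :=
        ((hasDerivAt_id y).add_const 1).neg
      have hb : HasDerivAt (fun t : ℝ =>
          x ^ 2 + 2 * x ^ 2 * t + x ^ 2 * t ^ 2 + t ^ 2)
          (2 * x ^ 2 + x ^ 2 * (2 * y) + 2 * y) y := by
        have h := (((hasDerivAt_const y (x ^ 2)).add
          ((hasDerivAt_id y).const_mul (2 * x ^ 2))).add
          ((hasDerivAt_pow 2 y).const_mul (x ^ 2))).add (hasDerivAt_pow 2 y)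
        exact h.congr_deriv (by simp only [Nat.cast_ofNat, Nat.add_one_sub_one, pow_one]; ring)
      have h := ha.mul hb
      exact h.congr_deriv (by ring)
    exact this.deriv
  rw [h1, h2]; ring
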